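/- arXiv:2009.07309 — 3 statements merged into one kernel-verified Lean document; each statement's English description precedes it below -/
import Mathlib

section
/- Let N > 0 and K satisfy 2^(K-1) ≤ N < 2^K. Let b̃ = b̃_{K-1}...b̃_0 be the binary representation of N-1, let K_0 be the set of indices k with b̃_k = 0, and define H(b) = Σ_{k_0 ∈ K_0} b_{k_0} · Π_{k=k_0+1}^{K-1} (1 - (b_k - b̃_k)²) for a bit vector b encoding a number n ∈ {0,...,2^K - 1}. Then H(b) ≥ 0, with equality if and only if n < N. -/
lemma sum_pow_lt (K : ℕ) (f : ℕ → Bool) :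
    (∑ k ∈ Finset.range K, (if f k then 2^k else 0)) < 2 ^ K := by
  calc (∑ k ∈ Finset.range K, (if f k then 2^k else 0))
      ≤ ∑ k ∈ Finset.range K, 2^k := Finset.sum_le_sum (by intro i _; split <;> simp)
    _ < 2 ^ K := by
        rw [Nat.geomSum_eq (le_refl 2)]
        have : 0 < 2 ^ K := Nat.pow_pos (by norm_num)
        omega

lemma testBit_sum (K : ℕ) (f : ℕ → Bool) (j : ℕ) :
    Nat.testBit (∑ k ∈ Finset.range K, (if f k then 2^k else 0)) j
      = (f j && decide (j < K)) := by
  induction K with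
  | zero => simp
  | succ K ih =>
    rw [Finset.sum_range_succ]
    have hlt := sum_pow_lt K f
    have : (∑ k ∈ Finset.range K, (if f k then 2^k else 0)) + (if f K then 2^K else 0)
        = 2 ^ K * (f K).toNat + (∑ k ∈ Finset.range K, (if f k then 2^k else 0)) := by
      cases f K <;> simp [Nat.add_comm]
    rw [this, Nat.testBit_two_pow_mul_add _ hlt, ih]
    by_cases h : j < K
    · simp [h, Nat.lt_succ_of_lt h]
    · simp only [h, decide_false, Bool.and_false, if_neg h]
      rw [Nat.testBit_bool_toNat]
      by_cases h2 : j = K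
      · subst h2; simp
      · have : ¬ j < K + 1 := by omega
        simp [this, show j - K ≠ 0 by omega]

/-- Validity Hamiltonian for the HOBO encoding: `H(b) ≥ 0`, with equality
iff the encoded number `n = ∑ b_k 2^k` satisfies `n < N`. -/
theorem hobo_valid_nonneg_and_zero_iff
    (N K : ℕ) (hN : 0 < N) (h1 : 2 ^ (K - 1) ≤ N) (h2 : N < 2 ^ K)
    (b : Fin K → ℤ) (hb : ∀ k, b k = 0 ∨ b k = 1)
    (btilde : Fin K → ℤ)
    (hbt : ∀ k : Fin K, btilde k = if Nat.testBit (N - 1) k then 1 else 0)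
    (H : ℤ)
    (hH : H = ∑ k0 ∈ Finset.univ.filter (fun k : Fin K => btilde k = 0),
        b k0 * ∏ k ∈ Finset.Ioi k0, (1 - (b k - btilde k) ^ 2))
    (n : ℤ) (hn : n = ∑ k : Fin K, b k * 2 ^ (k : ℕ)) :
    0 ≤ H ∧ (H = 0 ↔ n < (N : ℤ)) := by
  set M : ℕ := N - 1 with hM
  -- boolean bit function for b
  set f : ℕ → Bool := fun j => if h : j < K then decide (b ⟨j, h⟩ = 1) else false with hf
  set m : ℕ := ∑ k ∈ Finset.range K, (if f k then 2^k else 0) with hm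
  have hmK : m < 2 ^ K := sum_pow_lt K f
  have hMK : M < 2 ^ K := by omega
  -- b k as an if
  have hbif : ∀ k : Fin K, b k = if f k then 1 else 0 := by
    intro k
    simp only [hf, k.isLt, dif_pos]
    rcases hb k with h | h <;> simp [h, Fin.eta]
  -- n = m
  have hnm : n = (m : ℤ) := by
    rw [hn, hm]
    push_cast
    rw [Finset.sum_range fun i => ((if f i then (2:ℤ)^i else 0))]
    · apply Finset.sum_congr rfl
      intro k _
      rw [hbif k]
      split <;> simp
  -- testBit of m
  have htm : ∀ j : ℕ, Nat.testBit m j = (f j && decide (j < K)) := fun j => testBit_sum K f j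
  have htmK : ∀ k : Fin K, Nat.testBit m k = decide (b k = 1) := by
    intro k
    rw [htm]
    simp [hf, k.isLt]
  -- btilde characterization
  have hbtb : ∀ k : Fin K, (btilde k = 0 ↔ Nat.testBit M k = false) := by
    intro k; rw [hbt k]; cases h : Nat.testBit M k <;> simp [h]
  have hbtb1 : ∀ k : Fin K, (btilde k = 1 ↔ Nat.testBit M k = true) := by
    intro k; rw [hbt k]; cases h : Nat.testBit M k <;> simp [h]
  -- agreement b k = btilde k ↔ testBit m k = testBit M k
  have hagree : ∀ k : Fin K, (b k = btilde k ↔ Nat.testBit m k = Nat.testBit M k) := by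
    intro k
    rw [hbt k, htmK k]
    rcases hb k with h | h <;> cases h2 : Nat.testBit M (k : ℕ) <;>
      simp only [h, h2, if_true, if_false, decide_eq_true_eq, decide_eq_false_iff_not] <;>
      norm_num
  -- each factor is an indicator
  have hfac : ∀ k : Fin K, (1 - (b k - btilde k) ^ 2) = if b k = btilde k then 1 else 0 := by
    intro k
    have hbt01 : btilde k = 0 ∨ btilde k = 1 := by rw [hbt k]; split <;> simp
    rcases hb k with h | h <;> rcases hbt01 with h2 | h2 <;> simp [h, h2] <;> norm_num
  -- each term is an indicator
  have hterm : ∀ k0 : Fin K,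
      b k0 * ∏ k ∈ Finset.Ioi k0, (1 - (b k - btilde k) ^ 2)
        = if (b k0 = 1 ∧ ∀ k ∈ Finset.Ioi k0, b k = btilde k) then 1 else 0 := by
    intro k0
    by_cases hP : ∀ k ∈ Finset.Ioi k0, b k = btilde k
    · have : ∏ k ∈ Finset.Ioi k0, (1 - (b k - btilde k) ^ 2) = 1 := by
        apply Finset.prod_eq_one
        intro k hk
        rw [hfac k, if_pos (hP k hk)]
      rw [this, mul_one]
      rcases hb k0 with h | h
      · rw [h, if_neg]; rintro ⟨h1, _⟩; omega
      · rw [if_pos ⟨h, hP⟩, h]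
    · obtain ⟨k, hk, hne⟩ := by push_neg at hP; exact hP
      have : ∏ k ∈ Finset.Ioi k0, (1 - (b k - btilde k) ^ 2) = 0 :=
        Finset.prod_eq_zero hk (by rw [hfac k, if_neg hne])
      rw [this, mul_zero, if_neg]
      push_neg
      intro _
      exact ⟨k, hk, hne⟩
  -- nonnegativity of each term
  have hterm_nonneg : ∀ k0 ∈ Finset.univ.filter (fun k : Fin K => btilde k = 0),
      0 ≤ b k0 * ∏ k ∈ Finset.Ioi k0, (1 - (b k - btilde k) ^ 2) := by
    intro k0 _
    rw [hterm k0]; split <;> norm_num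
  have hH0 : 0 ≤ H := hH ▸ Finset.sum_nonneg hterm_nonneg
  refine ⟨hH0, ?_⟩
  have hMN : (M : ℤ) + 1 = (N : ℤ) := by push_cast; omega
  rw [hnm, show ((m:ℤ) < (N:ℤ) ↔ m ≤ M) by omega]
  rw [hH, Finset.sum_eq_zero_iff_of_nonneg hterm_nonneg]
  constructor
  · -- all terms zero → m ≤ M
    intro hz
    by_contra hlt
    push_neg at hlt
    -- most significant differing bit
    have hne : m ^^^ M ≠ 0 := by
      intro h
      have := xor_eq_zero_iff.mp h
      omega
    obtain ⟨j, hj1, hj2⟩ := Nat.exists_most_significant_bit hne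
    have hdiff : Nat.testBit m j ≠ Nat.testBit M j := by
      rw [Nat.testBit_xor] at hj1
      intro h; rw [h] at hj1; simp at hj1
    have hagree_above : ∀ i, j < i → Nat.testBit m i = Nat.testBit M i := by
      intro i hi
      have h3 := hj2 i hi
      rw [Nat.testBit_xor] at h3
      cases h1 : Nat.testBit m i <;> cases h2 : Nat.testBit M i
      · rfl
      · rw [h1, h2] at h3; simp at h3
      · rw [h1, h2] at h3; simp at h3
      · rfl
    have hmj : Nat.testBit m j = true ∧ Nat.testBit M j = false := by
      cases h1 : Nat.testBit m j
      · have h2 : Nat.testBit M j = true := by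
          cases h2 : Nat.testBit M j
          · rw [h1, h2] at hdiff; simp at hdiff
          · rfl
        have := Nat.lt_of_testBit j h1 h2 hagree_above
        omega
      · cases h2 : Nat.testBit M j
        · exact ⟨rfl, rfl⟩
        · rw [h1, h2] at hdiff; simp at hdiff
    have hjK : j < K := by
      by_contra hge
      have : Nat.testBit m j = false := Nat.testBit_lt_two_pow (lt_of_lt_of_le hmK
        (Nat.pow_le_pow_right (by norm_num) (by omega)))
      rw [hmj.1] at this; simp at this
    set k0 : Fin K := ⟨j, hjK⟩ with hk0
    have hbt0 : btilde k0 = 0 := (hbtb k0).mpr hmj.2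
    have := hz k0 (by simp [hbt0])
    rw [hterm k0] at this
    rw [if_pos] at this
    · simp at this
    constructor
    · have := htmK k0
      rw [hmj.1] at this
      simpa using this.symm
    · intro k hk
      rw [hagree k]
      have hkk : k0 < k := Finset.mem_Ioi.mp hk
      exact hagree_above (k : ℕ) (Fin.lt_def.mp hkk)
  · -- m ≤ M → all terms zero
    intro hle k0 hk0
    rw [hterm k0]
    rw [if_neg]
    rintro ⟨hb1, hP⟩
    have hbt0 : btilde k0 = 0 := (Finset.mem_filter.mp hk0).2
    have hM0 : Nat.testBit M k0 = false := (hbtb k0).mp hbt0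
    have hm1 : Nat.testBit m k0 = true := by rw [htmK k0]; simpa using hb1
    have : M < m := by
      apply Nat.lt_of_testBit k0 hM0 hm1
      intro i hi
      by_cases hiK : i < K
      · have hmem : (⟨i, hiK⟩ : Fin K) ∈ Finset.Ioi k0 :=
          Finset.mem_Ioi.mpr (Fin.lt_def.mpr hi)
        exact ((hagree ⟨i, hiK⟩).mp (hP ⟨i, hiK⟩ hmem)).symm
      · have e1 : M < 2 ^ i :=
          lt_of_lt_of_le hMK (Nat.pow_le_pow_right (by norm_num) (by omega))
        have e2 : m < 2 ^ i :=
          lt_of_lt_of_le hmK (Nat.pow_le_pow_right (by norm_num) (by omega))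
        rw [Nat.testBit_lt_two_pow e1, Nat.testBit_lt_two_pow e2]
    omega
end

section
/- For the complete graph on N vertices (N ≥ 2), the edges can be partitioned into N-1 perfect matchings when N is even, and into N matchings each of size (N-1)/2 when N is odd (round-robin scheduling). -/
open Fin.CommRing

lemma double_inj (n : ℕ) (h : Odd (n+1)) :
    Function.Injective (fun a : Fin (n+1) => a + a) := by
  intro a b hab
  simp only at hab
  have hc : 2 • (a - b) = 0 := by
    have h2 : 2 • a = 2 • b := by rw [two_nsmul, two_nsmul]; exact hab
    rw [smul_sub, h2, sub_self]
  have hd : addOrderOf (a - b) ∣ 2 := addOrderOf_dvd_of_nsmul_eq_zero hc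
  have hd' : addOrderOf (a - b) ∣ (n+1) := by
    simpa using addOrderOf_dvd_card (x := a - b)
  have hdvd : addOrderOf (a - b) ∣ Nat.gcd 2 (n+1) := Nat.dvd_gcd hd hd'
  rw [Nat.coprime_two_left.mpr h, Nat.dvd_one, AddMonoid.addOrderOf_eq_one_iff] at hdvd
  exact sub_eq_zero.mp hdvd

lemma double_surj (n : ℕ) (h : Odd (n+1)) :
    Function.Surjective (fun a : Fin (n+1) => a + a) :=
  Finite.surjective_of_injective (double_inj n h)

lemma odd_case (n : ℕ) (hodd : Odd (n+1)) :
    ∃ f : Sym2 (Fin (n+1)) → Fin (n+1),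
      ∀ m : Fin (n+1),
        (∀ e e' : Sym2 (Fin (n+1)), ¬e.IsDiag → ¬e'.IsDiag →
          f e = m → f e' = m → e ≠ e' → ∀ v : Fin (n+1), ¬(v ∈ e ∧ v ∈ e')) ∧
        (Finset.univ.filter
            (fun e : Sym2 (Fin (n+1)) => ¬e.IsDiag ∧ f e = m)).card = n / 2 := by
  refine ⟨Sym2.lift ⟨fun a b => a + b, fun a b => add_comm a b⟩, fun m => ⟨?_, ?_⟩⟩
  · -- matching property
    intro e e' hd hd' hf hf' hne v hv
    induction e using Sym2.ind with | _ a b =>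
    induction e' using Sym2.ind with | _ a' b' =>
    simp only [Sym2.lift_mk] at hf hf'
    simp only [Sym2.mem_iff] at hv
    rw [Sym2.mk_isDiag_iff] at hd hd'
    apply hne
    rw [Sym2.eq_iff]
    rcases hv with ⟨(rfl|rfl), (h'|h')⟩
    · subst h'; exact Or.inl ⟨rfl, by linear_combination hf - hf'⟩
    · subst h'; exact Or.inr ⟨rfl, by linear_combination hf - hf'⟩
    · subst h'; exact Or.inr ⟨by linear_combination hf - hf', rfl⟩
    · subst h'; exact Or.inl ⟨by linear_combination hf - hf', rfl⟩
  · -- cardinality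
    obtain ⟨a0, ha0⟩ := double_surj n hodd m
    simp only at ha0
    set S := Finset.univ.filter
        (fun e : Sym2 (Fin (n+1)) => ¬e.IsDiag ∧
          Sym2.lift ⟨fun a b => a + b, fun a b => add_comm a b⟩ e = m) with hS
    set P : Finset (Fin (n+1) × Fin (n+1)) :=
        Finset.univ.filter (fun p => p.1 + p.2 = m ∧ p.1 ≠ p.2) with hP
    have hPcard : P.card = n := by
      have himg : P = (Finset.univ.erase a0).image (fun a => (a, m - a)) := by
        ext ⟨x, y⟩
        simp only [hP, Finset.mem_filter, Finset.mem_univ, true_and, Finset.mem_image,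
          Finset.mem_erase, Prod.mk.injEq]
        constructor
        · rintro ⟨h1, h2⟩
          refine ⟨x, ⟨?_, trivial⟩, rfl, by linear_combination -h1⟩
          rintro rfl
          exact h2 (by linear_combination ha0 - h1)
        · rintro ⟨a, ⟨hane, -⟩, rfl, rfl⟩
          refine ⟨by ring, fun h => hane ?_⟩
          exact double_inj n hodd (show a + a = a0 + a0 by linear_combination h - ha0)
      rw [himg, Finset.card_image_of_injective _
        (fun a b hab => ((Prod.mk.injEq _ _ _ _).mp hab).1)]
      simp
    have hfiber : P.card = 2 * S.card := by
      rw [Finset.card_eq_sum_card_fiberwise (f := fun p : Fin (n+1) × Fin (n+1) => s(p.1, p.2)) (t := S) ?_]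
      · rw [Finset.sum_congr rfl (fun e he => ?_), Finset.sum_const, smul_eq_mul, mul_comm]
        induction e using Sym2.ind with | _ a b =>
        simp only [hS, Finset.mem_filter, Sym2.mk_isDiag_iff, Sym2.lift_mk] at he
        obtain ⟨-, hab, hsum⟩ := he
        have hset : P.filter (fun p => s(p.1, p.2) = s(a, b)) = {(a, b), (b, a)} := by
          ext ⟨x, y⟩
          simp only [Finset.mem_filter, hP, Finset.mem_univ, true_and, Finset.mem_insert,
            Finset.mem_singleton, Prod.mk.injEq, Sym2.eq_iff]
          constructor
          · rintro ⟨-, (⟨h1, h2⟩ | ⟨h1, h2⟩)⟩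
            · exact Or.inl ⟨h1, h2⟩
            · exact Or.inr ⟨h1, h2⟩
          · rintro (⟨rfl, rfl⟩ | ⟨rfl, rfl⟩)
            · exact ⟨⟨hsum, hab⟩, Or.inl ⟨rfl, rfl⟩⟩
            · exact ⟨⟨by linear_combination hsum, fun h => hab h.symm⟩, Or.inr ⟨rfl, rfl⟩⟩
        rw [hset, Finset.card_insert_of_notMem (by simp [Prod.ext_iff]; exact fun h => (hab h).elim),
          Finset.card_singleton]
      · rintro ⟨x, y⟩ hp
        simp only [hP, Finset.mem_coe, Finset.mem_filter, Finset.mem_univ, true_and] at hp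
        simp only [hS, Finset.mem_coe, Finset.mem_filter, Finset.mem_univ, true_and, Sym2.mk_isDiag_iff,
          Sym2.lift_mk]
        exact ⟨hp.2, hp.1⟩
    have hn : Even n := by rcases hodd with ⟨k, hk⟩; exact ⟨k, by omega⟩
    rcases hn with ⟨k, hk⟩
    omega



noncomputable def evenF (k : ℕ) : Sym2 (Fin (k+2)) → Fin (k+1) :=
  Sym2.lift ⟨fun a b =>
    Fin.lastCases (Fin.lastCases 0 (fun b' => b' + b') b)
      (fun a' => Fin.lastCases (a' + a') (fun b' => a' + b') b) a,
    by
      intro a b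
      induction a using Fin.lastCases with
      | last => induction b using Fin.lastCases with
        | last => simp
        | cast b' => simp
      | cast a' => induction b using Fin.lastCases with
        | last => simp
        | cast b' => simp [add_comm]⟩

@[simp] lemma evenF_last_last (k : ℕ) :
    evenF k s(Fin.last (k+1), Fin.last (k+1)) = 0 := by simp [evenF]

@[simp] lemma evenF_last_cast (k : ℕ) (b' : Fin (k+1)) :
    evenF k s(Fin.last (k+1), Fin.castSucc b') = b' + b' := by simp [evenF]

@[simp] lemma evenF_cast_last (k : ℕ) (a' : Fin (k+1)) :
    evenF k s(Fin.castSucc a', Fin.last (k+1)) = a' + a' := by simp [evenF]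

@[simp] lemma evenF_cast_cast (k : ℕ) (a' b' : Fin (k+1)) :
    evenF k s(Fin.castSucc a', Fin.castSucc b') = a' + b' := by simp [evenF]

lemma even_case (k : ℕ) (hodd : Odd (k+1)) :
    ∃ f : Sym2 (Fin (k+2)) → Fin (k+1),
      ∀ m : Fin (k+1),
        (∀ e e' : Sym2 (Fin (k+2)), ¬e.IsDiag → ¬e'.IsDiag →
          f e = m → f e' = m → e ≠ e' → ∀ v : Fin (k+2), ¬(v ∈ e ∧ v ∈ e')) ∧
        (∀ v : Fin (k+2), ∃ e : Sym2 (Fin (k+2)), ¬e.IsDiag ∧ f e = m ∧ v ∈ e) := by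
  refine ⟨evenF k, fun m => ?_⟩
  obtain ⟨a0, ha0⟩ := double_surj k hodd m
  simp only at ha0
  -- the canonical edge through each vertex
  set E : Fin (k+2) → Sym2 (Fin (k+2)) := fun v =>
    Fin.lastCases (s(Fin.last (k+1), Fin.castSucc a0))
      (fun v' => if v' = a0 then s(Fin.castSucc v', Fin.last (k+1))
        else s(Fin.castSucc v', Fin.castSucc (m - v'))) v with hE
  have hinj := double_inj k hodd
  have hlast : ∀ (x : Fin (k+1)), Fin.castSucc x ≠ Fin.last (k+1) :=
    fun x => (Fin.castSucc_lt_last x).ne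
  have hEgood : ∀ v : Fin (k+2), ¬(E v).IsDiag ∧ evenF k (E v) = m ∧ v ∈ E v := by
    intro v
    induction v using Fin.lastCases with
    | last =>
      simp only [hE, Fin.lastCases_last]
      exact ⟨by rw [Sym2.mk_isDiag_iff]; exact fun h => hlast a0 h.symm,
        by rw [evenF_last_cast]; exact ha0, by simp⟩
    | cast v' =>
      simp only [hE, Fin.lastCases_castSucc]
      by_cases hv : v' = a0
      · subst hv
        have hEv : (if v' = v' then s(Fin.castSucc v', Fin.last (k+1))
            else s(Fin.castSucc v', Fin.castSucc (m - v'))) = s(Fin.castSucc v', Fin.last (k+1)) :=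
          if_pos rfl
        rw [hEv]
        exact ⟨by rw [Sym2.mk_isDiag_iff]; exact hlast v',
          by rw [evenF_cast_last]; exact ha0, by simp⟩
      · simp only [if_neg hv]
        refine ⟨?_, by rw [evenF_cast_cast]; ring, by simp⟩
        rw [Sym2.mk_isDiag_iff]
        intro h
        have h' : v' = m - v' := Fin.castSucc_injective _ h
        exact hv (hinj (show v' + v' = a0 + a0 by rw [ha0]; linear_combination h'))
  -- uniqueness: any round-m edge through v equals E v
  have hEuniq : ∀ (v : Fin (k+2)) (e : Sym2 (Fin (k+2))),
      ¬e.IsDiag → evenF k e = m → v ∈ e → e = E v := by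
    have main : ∀ (a b : Fin (k+2)), ¬(s(a,b)).IsDiag → evenF k s(a,b) = m →
        s(a,b) = E a := by
      intro a b hdiag hf
      rw [Sym2.mk_isDiag_iff] at hdiag
      induction a using Fin.lastCases with
      | last =>
        induction b using Fin.lastCases with
        | last => exact absurd rfl hdiag
        | cast b' =>
          rw [evenF_last_cast] at hf
          have : b' = a0 := hinj (by simp only; rw [hf, ha0])
          subst this
          simp [hE]
      | cast a' =>
        induction b using Fin.lastCases with
        | last =>
          rw [evenF_cast_last] at hf
          have : a' = a0 := hinj (by simp only; rw [hf, ha0])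
          simp [hE, if_pos this]
        | cast b' =>
          rw [evenF_cast_cast] at hf
          have hne : a' ≠ a0 := by
            rintro rfl
            apply hdiag
            congr 1
            exact hinj (show b' + b' = a' + a' by linear_combination 2*hf - 2*ha0).symm
          have hb' : b' = m - a' := by linear_combination hf
          simp [hE, if_neg hne, ← hb']
    intro v e hdiag hf hv
    induction e using Sym2.ind with | _ a b =>
    rw [Sym2.mem_iff] at hv
    rcases hv with rfl | rfl
    · exact main v b hdiag hf
    · rw [Sym2.eq_swap] at hdiag hf ⊢
      exact main v a hdiag hf
  refine ⟨?_, fun v => ⟨E v, hEgood v⟩⟩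
  intro e e' hd hd' hf hf' hne v hv
  exact hne ((hEuniq v e hd hf hv.1).trans (hEuniq v e' hd' hf' hv.2).symm)


/-- Round-robin scheduling: the edges of the complete graph on `N ≥ 2` vertices
can be partitioned into `N - 1` perfect matchings when `N` is even, and into
`N` matchings of size `(N-1)/2` each when `N` is odd. -/
theorem round_robin_schedule (N : ℕ) (hN : 2 ≤ N) :
    (Even N →
      ∃ f : Sym2 (Fin N) → Fin (N - 1),
        ∀ m : Fin (N - 1),
          (∀ e e' : Sym2 (Fin N), ¬e.IsDiag → ¬e'.IsDiag →
            f e = m → f e' = m → e ≠ e' → ∀ v : Fin N, ¬(v ∈ e ∧ v ∈ e')) ∧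
          (∀ v : Fin N, ∃ e : Sym2 (Fin N), ¬e.IsDiag ∧ f e = m ∧ v ∈ e)) ∧
    (Odd N →
      ∃ f : Sym2 (Fin N) → Fin N,
        ∀ m : Fin N,
          (∀ e e' : Sym2 (Fin N), ¬e.IsDiag → ¬e'.IsDiag →
            f e = m → f e' = m → e ≠ e' → ∀ v : Fin N, ¬(v ∈ e ∧ v ∈ e')) ∧
          (Finset.univ.filter
              (fun e : Sym2 (Fin N) => ¬e.IsDiag ∧ f e = m)).card = (N - 1) / 2) := by
  constructor
  · intro hEven
    obtain ⟨k, rfl⟩ : ∃ k, N = k + 2 := ⟨N - 2, by omega⟩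
    have hodd : Odd (k + 1) := by
      rcases hEven with ⟨j, hj⟩; exact ⟨j - 1, by omega⟩
    exact even_case k hodd
  · intro hOdd
    obtain ⟨n, rfl⟩ : ∃ n, N = n + 1 := ⟨N - 1, by omega⟩
    exact odd_case n hOdd
end

section
/- Let b ∈ ({0,1}^K)^L represent L bunches of K bits each. The constraint 'exactly one bunch is nonzero' holds if and only if Σ_{l=1}^L (Σ_k b_{lk}) ≥ 1 and Σ_{l=1}^L (Σ_k b_{lk})·(Σ_{l'≠l} Σ_k b_{l'k}) = 0; moreover the second sum is always nonnegative and equals 0 exactly when at most one bunch contains a nonzero bit. -/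
/-- Correctness of the validity Hamiltonian of the mixed encoding: for bits
`b_{lk} ∈ {0,1}` arranged in `L` bunches of `K` bits, the quadratic form
`Q = ∑_l (∑_k b_{lk})·(∑_{l'≠l} ∑_k b_{l'k})` is nonnegative, vanishes exactly
when at most one bunch is nonzero, and together with `∑_{l,k} b_{lk} ≥ 1` its
vanishing is equivalent to exactly one bunch being nonzero. -/
theorem mixed_valid_hamiltonian (L K : ℕ) (b : Fin L → Fin K → ℝ)
    (hb : ∀ l k, b l k = 0 ∨ b l k = 1) :
    (0 ≤ ∑ l : Fin L, (∑ k : Fin K, b l k) *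
        (∑ l' ∈ Finset.univ.erase l, ∑ k : Fin K, b l' k)) ∧
    ((∑ l : Fin L, (∑ k : Fin K, b l k) *
        (∑ l' ∈ Finset.univ.erase l, ∑ k : Fin K, b l' k)) = 0 ↔
      ∀ l l' : Fin L, (∃ k, b l k ≠ 0) → (∃ k, b l' k ≠ 0) → l = l') ∧
    ((1 ≤ ∑ l : Fin L, ∑ k : Fin K, b l k ∧
        (∑ l : Fin L, (∑ k : Fin K, b l k) *
          (∑ l' ∈ Finset.univ.erase l, ∑ k : Fin K, b l' k)) = 0) ↔
      ∃! l : Fin L, ∃ k, b l k ≠ 0) := by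
  set S : Fin L → ℝ := fun l => ∑ k : Fin K, b l k with hSdef
  have hSnn : ∀ l, 0 ≤ S l := fun l =>
    Finset.sum_nonneg fun k _ => by rcases hb l k with h | h <;> simp [h]
  have hTnn : ∀ l : Fin L, 0 ≤ ∑ l' ∈ Finset.univ.erase l, S l' := fun l =>
    Finset.sum_nonneg fun l' _ => hSnn l'
  have htermnn : ∀ l : Fin L, (0:ℝ) ≤ S l * ∑ l' ∈ Finset.univ.erase l, S l' :=
    fun l => mul_nonneg (hSnn l) (hTnn l)
  have hSne : ∀ l, (∃ k, b l k ≠ 0) ↔ S l ≠ 0 := by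
    intro l
    constructor
    · rintro ⟨k, hk⟩ h0
      have := (Finset.sum_eq_zero_iff_of_nonneg
        (fun k _ => by rcases hb l k with h | h <;> simp [h])).mp h0 k (Finset.mem_univ k)
      exact hk this
    · intro h
      by_contra hc
      push_neg at hc
      exact h (Finset.sum_eq_zero fun k _ => hc k)
  have hSge1 : ∀ l, S l ≠ 0 → (1:ℝ) ≤ S l := by
    intro l h
    obtain ⟨k, hk⟩ := (hSne l).mpr h
    have hk1 : b l k = 1 := (hb l k).resolve_left hk
    calc (1:ℝ) = b l k := hk1.symm
      _ ≤ S l := Finset.single_le_sum (fun k _ => by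
          rcases hb l k with h | h <;> simp [h]) (Finset.mem_univ k)
  have hQnn : (0:ℝ) ≤ ∑ l : Fin L, S l * ∑ l' ∈ Finset.univ.erase l, S l' :=
    Finset.sum_nonneg fun l _ => htermnn l
  have hiff : (∑ l : Fin L, S l * ∑ l' ∈ Finset.univ.erase l, S l') = 0 ↔
      ∀ l l' : Fin L, (∃ k, b l k ≠ 0) → (∃ k, b l' k ≠ 0) → l = l' := by
    constructor
    · intro hQ l l' hl hl'
      by_contra hne
      have hl0 := (hSne l).mp hl
      have hl'0 := (hSne l').mp hl'
      have hterm : S l * ∑ l'' ∈ Finset.univ.erase l, S l'' = 0 :=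
        (Finset.sum_eq_zero_iff_of_nonneg (fun l _ => htermnn l)).mp hQ l (Finset.mem_univ l)
      rcases mul_eq_zero.mp hterm with h | h
      · exact hl0 h
      · have : S l' = 0 :=
          (Finset.sum_eq_zero_iff_of_nonneg (fun x _ => hSnn x)).mp h l'
            (Finset.mem_erase.mpr ⟨fun he => hne he.symm, Finset.mem_univ _⟩)
        exact hl'0 this
    · intro h
      apply Finset.sum_eq_zero
      intro l _
      by_cases hl : S l = 0
      · simp [hl]
      · have : ∑ l' ∈ Finset.univ.erase l, S l' = 0 := by
          apply Finset.sum_eq_zero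
          intro l' hl'
          by_contra hl'0
          exact (Finset.mem_erase.mp hl').1 (h l' l ((hSne l').mpr hl'0) ((hSne l).mpr hl))
        simp [this]
  refine ⟨hQnn, hiff, ?_⟩
  constructor
  · rintro ⟨h1, hQ⟩
    have hex : ∃ l, S l ≠ 0 := by
      by_contra hc
      push_neg at hc
      have : (∑ l : Fin L, S l) = 0 := Finset.sum_eq_zero fun l _ => hc l
      rw [this] at h1; linarith
    obtain ⟨l, hl⟩ := hex
    exact ⟨l, (hSne l).mpr hl, fun l' hl' => hiff.mp hQ l' l hl' ((hSne l).mpr hl)⟩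
  · rintro ⟨l, hl, hu⟩
    refine ⟨?_, hiff.mpr fun a a' ha ha' => (hu a ha).trans (hu a' ha').symm⟩
    calc (1:ℝ) ≤ S l := hSge1 l ((hSne l).mp hl)
      _ ≤ ∑ l : Fin L, S l := Finset.single_le_sum (fun x _ => hSnn x) (Finset.mem_univ l)
end
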